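/- Let ψ : ℝ² → ℝ be C³ with ψ(0,0) = 0, ∇ψ(0,0) = 0, and suppose the Hessian of ψ at 0 is diagonal with entries 2A₂₀ and 2A₀₂ where A₂₀ = 0, A₀₂ ≠ 0, and the third-order Taylor coefficient A₂₁ of ξ₁²ξ₂ is nonzero. Then in every neighborhood of (0,0) there exist points where the Hessian determinant ψ₁₁ψ₂₂ − ψ₁₂² is strictly positive and points where it is strictly negative. -/

import Mathlib

open Filter Topology

private lemma myHasDerivAt_fst (F : ℝ × ℝ → ℝ) (hF : Differentiable ℝ F) (a b : ℝ) :
    HasDerivAt (fun s => F (s, b)) (fderiv ℝ F (a, b) (1, 0)) a := by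
  have h1 : HasDerivAt (fun s : ℝ => (s, b)) ((1:ℝ), (0:ℝ)) a :=
    (hasDerivAt_id a).prodMk (hasDerivAt_const a b)
  exact ((hF (a, b)).hasFDerivAt.comp_hasDerivAt a h1)

private lemma myHasDerivAt_snd (F : ℝ × ℝ → ℝ) (hF : Differentiable ℝ F) (a b : ℝ) :
    HasDerivAt (fun s => F (a, s)) (fderiv ℝ F (a, b) (0, 1)) b := by
  have h1 : HasDerivAt (fun s : ℝ => (a, s)) ((0:ℝ), (1:ℝ)) b :=
    (hasDerivAt_const b a).prodMk (hasDerivAt_id b)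
  exact ((hF (a, b)).hasFDerivAt.comp_hasDerivAt b h1)

/-- A function vanishing at `0` with nonzero derivative `L` at `0` satisfies
`f b * L > 0` for suitable small positive `b` and `f b * L < 0` for suitable small
negative `b`. -/
private lemma sign_change (f : ℝ → ℝ) (L : ℝ) (hL : L ≠ 0) (hf0 : f 0 = 0)
    (hf : HasDerivAt f L 0) (ε : ℝ) (hε : 0 < ε) :
    (∃ b, b ^ 2 < ε ^ 2 ∧ 0 < f b * L) ∧ (∃ b, b ^ 2 < ε ^ 2 ∧ f b * L < 0) := by
  have hslope : Tendsto (fun b => f b / b) (𝓝[≠] (0:ℝ)) (𝓝 L) := by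
    have h := hasDerivAt_iff_tendsto_slope.mp hf
    have hs : slope f 0 = fun b => f b / b := by
      funext b; simp [slope_def_field, hf0]
    rwa [hs] at h
  have hTL : Tendsto (fun b => (f b / b) * L) (𝓝[≠] (0:ℝ)) (𝓝 (L * L)) :=
    hslope.mul_const L
  have hLL : 0 < L * L := mul_self_pos.mpr hL
  have hEv : ∀ᶠ b in 𝓝[≠] (0:ℝ), 0 < (f b / b) * L :=
    hTL.eventually (eventually_gt_nhds hLL)
  constructor
  · -- positive side : take b > 0
    have hle : 𝓝[>] (0:ℝ) ≤ 𝓝[≠] (0:ℝ) :=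
      nhdsWithin_mono 0 (fun x hx => ne_of_gt hx)
    have hEv' : ∀ᶠ b in 𝓝[>] (0:ℝ), 0 < (f b / b) * L := hEv.filter_mono hle
    have hIoo : ∀ᶠ b in 𝓝[>] (0:ℝ), b ∈ Set.Ioo (0:ℝ) ε :=
      Ioo_mem_nhdsGT_of_mem ⟨le_refl 0, hε⟩
    obtain ⟨b, hb1, hb2⟩ := (hEv'.and hIoo).exists
    refine ⟨b, by nlinarith [hb2.1, hb2.2], ?_⟩
    have hbne : b ≠ 0 := ne_of_gt hb2.1
    have : f b * L = ((f b / b) * L) * b := by field_simp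
    rw [this]; exact mul_pos hb1 hb2.1
  · -- negative side : take b < 0
    have hle : 𝓝[<] (0:ℝ) ≤ 𝓝[≠] (0:ℝ) :=
      nhdsWithin_mono 0 (fun x hx => ne_of_lt hx)
    have hEv' : ∀ᶠ b in 𝓝[<] (0:ℝ), 0 < (f b / b) * L := hEv.filter_mono hle
    have hIoo : ∀ᶠ b in 𝓝[<] (0:ℝ), b ∈ Set.Ioo (-ε) (0:ℝ) :=
      Ioo_mem_nhdsLT_of_mem ⟨by linarith, le_refl 0⟩
    obtain ⟨b, hb1, hb2⟩ := (hEv'.and hIoo).exists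
    refine ⟨b, by nlinarith [hb2.1, hb2.2], ?_⟩
    have hbne : b ≠ 0 := ne_of_lt hb2.2
    have : f b * L = ((f b / b) * L) * b := by field_simp
    rw [this]; exact mul_neg_of_pos_of_neg hb1 hb2.2

/-- If `ψ` is `C³` with `ψ(0,0) = 0`, `∇ψ(0,0) = 0`, Hessian at the origin diagonal with
entries `2A₂₀ = 0` and `2A₀₂ ≠ 0`, and the third-order Taylor coefficient `A₂₁` of
`ξ₁²ξ₂` (i.e. `ψ₁₁₂(0,0) = 2A₂₁`) is nonzero, then every neighborhood of the origin
contains points where the Hessian determinant `ψ₁₁ψ₂₂ − ψ₁₂²` is strictly positive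
and points where it is strictly negative. -/
theorem stmt3 (ψ : ℝ → ℝ → ℝ) (A₂₀ A₀₂ A₂₁ : ℝ)
    (hC3 : ContDiff ℝ 3 (fun p : ℝ × ℝ => ψ p.1 p.2))
    (h0 : ψ 0 0 = 0)
    (h1 : deriv (fun t => ψ t 0) 0 = 0)
    (h2 : deriv (fun t => ψ 0 t) 0 = 0)
    (h11 : deriv (fun t => deriv (fun s => ψ s 0) t) 0 = 2 * A₂₀)
    (h22 : deriv (fun t => deriv (fun s => ψ 0 s) t) 0 = 2 * A₀₂)
    (h12 : deriv (fun t => deriv (fun s => ψ t s) 0) 0 = 0)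
    (h21 : deriv (fun t => deriv (fun s => ψ s t) 0) 0 = 0)
    (hA20 : A₂₀ = 0) (hA02 : A₀₂ ≠ 0)
    (h112 : deriv (fun v => deriv (fun u => deriv (fun s => ψ s v) u) 0) 0 = 2 * A₂₁)
    (hA21 : A₂₁ ≠ 0) :
    ∀ ε > (0 : ℝ),
      (∃ a b : ℝ, a ^ 2 + b ^ 2 < ε ^ 2 ∧
        0 < deriv (fun t => deriv (fun s => ψ s b) t) a *
              deriv (fun t => deriv (fun s => ψ a s) t) b -
              (deriv (fun t => deriv (fun s => ψ t s) b) a) ^ 2) ∧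
      (∃ a b : ℝ, a ^ 2 + b ^ 2 < ε ^ 2 ∧
        deriv (fun t => deriv (fun s => ψ s b) t) a *
            deriv (fun t => deriv (fun s => ψ a s) t) b -
            (deriv (fun t => deriv (fun s => ψ t s) b) a) ^ 2 < 0) := by
  intro ε hε
  set F : ℝ × ℝ → ℝ := fun p => ψ p.1 p.2 with hFdef
  set P1 : ℝ × ℝ → ℝ := fun p => fderiv ℝ F p (1, 0) with hP1def
  set P2 : ℝ × ℝ → ℝ := fun p => fderiv ℝ F p (0, 1) with hP2def
  set P11 : ℝ × ℝ → ℝ := fun p => fderiv ℝ P1 p (1, 0) with hP11def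
  set P21 : ℝ × ℝ → ℝ := fun p => fderiv ℝ P2 p (1, 0) with hP21def
  set P22 : ℝ × ℝ → ℝ := fun p => fderiv ℝ P2 p (0, 1) with hP22def
  have hFd : Differentiable ℝ F := hC3.differentiable (by norm_num)
  have hP1c : ContDiff ℝ 2 P1 := (hC3.fderiv_right (by norm_num)).clm_apply contDiff_const
  have hP2c : ContDiff ℝ 2 P2 := (hC3.fderiv_right (by norm_num)).clm_apply contDiff_const
  have hP1d : Differentiable ℝ P1 := hP1c.differentiable (by norm_num)
  have hP2d : Differentiable ℝ P2 := hP2c.differentiable (by norm_num)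
  have hP11c : ContDiff ℝ 1 P11 := (hP1c.fderiv_right (by norm_num)).clm_apply contDiff_const
  have hP21c : ContDiff ℝ 1 P21 := (hP2c.fderiv_right (by norm_num)).clm_apply contDiff_const
  have hP22c : ContDiff ℝ 1 P22 := (hP2c.fderiv_right (by norm_num)).clm_apply contDiff_const
  have hP11d : Differentiable ℝ P11 := hP11c.differentiable (by norm_num)
  have hP21d : Differentiable ℝ P21 := hP21c.differentiable (by norm_num)
  have hP22d : Differentiable ℝ P22 := hP22c.differentiable (by norm_num)
  -- first partial rewrites
  have e1 : ∀ b, (fun t => deriv (fun s => ψ s b) t) = fun t => P1 (t, b) := by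
    intro b; funext t; exact (myHasDerivAt_fst F hFd t b).deriv
  have e2 : ∀ a, (fun t => deriv (fun s => ψ a s) t) = fun t => P2 (a, t) := by
    intro a; funext t; exact (myHasDerivAt_snd F hFd a t).deriv
  have e2' : ∀ b, (fun t => deriv (fun s => ψ t s) b) = fun t => P2 (t, b) := by
    intro b; funext t; exact (myHasDerivAt_snd F hFd t b).deriv
  -- second partial rewrites
  have e11 : ∀ a b, deriv (fun t => deriv (fun s => ψ s b) t) a = P11 (a, b) := by
    intro a b; rw [e1 b]; exact (myHasDerivAt_fst P1 hP1d a b).deriv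
  have e22 : ∀ a b, deriv (fun t => deriv (fun s => ψ a s) t) b = P22 (a, b) := by
    intro a b; rw [e2 a]; exact (myHasDerivAt_snd P2 hP2d a b).deriv
  have e21 : ∀ a b, deriv (fun t => deriv (fun s => ψ t s) b) a = P21 (a, b) := by
    intro a b; rw [e2' b]; exact (myHasDerivAt_fst P2 hP2d a b).deriv
  -- translate hypotheses
  have hP11_00 : P11 (0, 0) = 0 := by rw [← e11 0 0, h11, hA20]; ring
  have hP22_00 : P22 (0, 0) = 2 * A₀₂ := by rw [← e22 0 0]; exact h22
  have hP21_00 : P21 (0, 0) = 0 := by rw [← e21 0 0]; exact h12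
  have h112' : deriv (fun v => P11 (0, v)) 0 = 2 * A₂₁ := by
    have : (fun v => deriv (fun u => deriv (fun s => ψ s v) u) 0) = fun v => P11 (0, v) := by
      funext v; exact e11 0 v
    rw [← this]; exact h112
  -- derivatives along the b-axis
  have hg11 : HasDerivAt (fun b => P11 (0, b)) (2 * A₂₁) 0 := by
    have h := myHasDerivAt_snd P11 hP11d 0 0
    rw [h.deriv] at h112'
    rwa [h112'] at h
  have hg22 : HasDerivAt (fun b => P22 (0, b)) (fderiv ℝ P22 (0, 0) (0, 1)) 0 :=
    myHasDerivAt_snd P22 hP22d 0 0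
  have hg21 : HasDerivAt (fun b => P21 (0, b)) (fderiv ℝ P21 (0, 0) (0, 1)) 0 :=
    myHasDerivAt_snd P21 hP21d 0 0
  -- the Hessian determinant along the b-axis
  set f : ℝ → ℝ := fun b => P11 (0, b) * P22 (0, b) - (P21 (0, b)) ^ 2 with hfdef
  have hf0 : f 0 = 0 := by
    have hfe : f 0 = P11 (0, 0) * P22 (0, 0) - P21 (0, 0) ^ 2 := rfl
    rw [hfe, hP11_00, hP21_00]; ring
  set L : ℝ := 4 * (A₂₁ * A₀₂) with hLdef
  have hL : L ≠ 0 := by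
    simp only [hLdef]
    exact mul_ne_zero (by norm_num) (mul_ne_zero hA21 hA02)
  have hfL : HasDerivAt f L 0 := by
    have h := (hg11.mul hg22).sub (hg21.pow 2)
    have hval : 2 * A₂₁ * P22 (0, 0) + P11 (0, 0) * fderiv ℝ P22 (0, 0) (0, 1) -
        (2 : ℕ) * P21 (0, 0) ^ (2 - 1) * fderiv ℝ P21 (0, 0) (0, 1) = L := by
      rw [hP22_00, hP11_00, hP21_00, hLdef]; ring
    rwa [hval] at h
  obtain ⟨⟨bp, hbp1, hbp2⟩, ⟨bn, hbn1, hbn2⟩⟩ := sign_change f L hL hf0 hfL ε hε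
  -- conclude, splitting on the sign of L
  have key : ∀ b : ℝ, b ^ 2 < ε ^ 2 → 0 < f b →
      ∃ a b' : ℝ, a ^ 2 + b' ^ 2 < ε ^ 2 ∧
        0 < deriv (fun t => deriv (fun s => ψ s b') t) a *
              deriv (fun t => deriv (fun s => ψ a s) t) b' -
              (deriv (fun t => deriv (fun s => ψ t s) b') a) ^ 2 := by
    intro b hb hfb
    refine ⟨0, b, by simpa using hb, ?_⟩
    rw [e11 0 b, e22 0 b, e21 0 b]; exact hfb
  have key' : ∀ b : ℝ, b ^ 2 < ε ^ 2 → f b < 0 →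
      ∃ a b' : ℝ, a ^ 2 + b' ^ 2 < ε ^ 2 ∧
        deriv (fun t => deriv (fun s => ψ s b') t) a *
              deriv (fun t => deriv (fun s => ψ a s) t) b' -
              (deriv (fun t => deriv (fun s => ψ t s) b') a) ^ 2 < 0 := by
    intro b hb hfb
    refine ⟨0, b, by simpa using hb, ?_⟩
    rw [e11 0 b, e22 0 b, e21 0 b]; exact hfb
  rcases lt_or_gt_of_ne hL with hLneg | hLpos
  · exact ⟨key bn hbn1 (by nlinarith), key' bp hbp1 (by nlinarith)⟩
  · exact ⟨key bp hbp1 (by nlinarith), key' bn hbn1 (by nlinarith)⟩
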